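/- Fix an integer k ≥ 1 and 0 < a < 1. Let Y be the minimum of L+1 i.i.d. Gamma(k,1) random variables and let m̂ = m − L with L ≤ m/2. Then E[Γ(a, m̂ Y^k/k!) − Γ(a, m Y^k/k!)] = O(L²/m²) as m → ∞ (with L = L(m) → ∞, L = o(m)). -/

import Mathlib

set_option maxHeartbeats 1000000

open MeasureTheory Real Filter ProbabilityTheory

/-- Upper incomplete Gamma function `Γ(a,x) = ∫_x^∞ e^{-t} t^{a-1} dt`. -/
noncomputable def upperGamma (a x : ℝ) : ℝ := ∫ t in Set.Ioi x, Real.exp (-t) * t ^ (a - 1)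

/-- Regularized upper incomplete Gamma function `Q(a,x) = Γ(a,x)/Γ(a)`. -/
noncomputable def regQ (a x : ℝ) : ℝ := upperGamma a x / Real.Gamma a

lemma uG_integrableOn {b : ℝ} (hb : 0 < b) {x : ℝ} (hx : 0 ≤ x) :
    IntegrableOn (fun t => Real.exp (-t) * t ^ (b - 1)) (Set.Ioi x) :=
  (Real.GammaIntegral_convergent hb).mono_set (Set.Ioi_subset_Ioi hx)

lemma uG_nonneg (b : ℝ) {x : ℝ} (hx : 0 ≤ x) : 0 ≤ upperGamma b x := by
  refine setIntegral_nonneg measurableSet_Ioi fun t ht => ?_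
  have : 0 < t := lt_of_le_of_lt hx ht
  positivity

lemma uG_anti {b : ℝ} (hb : 0 < b) {x₀ x₁ : ℝ} (h0 : 0 ≤ x₀) (h : x₀ ≤ x₁) :
    upperGamma b x₁ ≤ upperGamma b x₀ := by
  refine setIntegral_mono_set (uG_integrableOn hb h0) ?_
    (HasSubset.Subset.eventuallyLE (Set.Ioi_subset_Ioi h))
  filter_upwards [ae_restrict_mem measurableSet_Ioi] with t ht
  have : 0 < t := lt_of_le_of_lt h0 ht
  positivity

lemma uG_le_Gamma {b : ℝ} (hb : 0 < b) {x : ℝ} (hx : 0 ≤ x) :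
    upperGamma b x ≤ Real.Gamma b := by
  rw [Real.Gamma_eq_integral hb]
  exact uG_anti hb le_rfl hx

lemma regQ_nonneg {b : ℝ} (hb : 0 < b) {x : ℝ} (hx : 0 ≤ x) : 0 ≤ regQ b x :=
  div_nonneg (uG_nonneg b hx) (Real.Gamma_pos_of_pos hb).le

lemma regQ_le_one {b : ℝ} (hb : 0 < b) {x : ℝ} (hx : 0 ≤ x) : regQ b x ≤ 1 :=
  (div_le_one (Real.Gamma_pos_of_pos hb)).mpr (uG_le_Gamma hb hx)

lemma uG_diff_le {a : ℝ} (ha0 : 0 < a) (ha1 : a ≤ 1) {x₀ x₁ : ℝ} (h0 : 0 < x₀) (h01 : x₀ ≤ x₁) :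
    upperGamma a x₀ - upperGamma a x₁ ≤ (x₁ - x₀) * Real.exp (-x₀) * x₀ ^ (a - 1) := by
  have hi : IntegrableOn (fun t => Real.exp (-t) * t ^ (a - 1)) (Set.Ioi x₀) :=
    uG_integrableOn ha0 h0.le
  unfold upperGamma
  have hsplit : (∫ t in Set.Ioi x₀, Real.exp (-t) * t ^ (a-1))
      = (∫ t in Set.Ioc x₀ x₁, Real.exp (-t) * t ^ (a-1))
        + ∫ t in Set.Ioi x₁, Real.exp (-t) * t ^ (a-1) := by
    rw [← setIntegral_union (Set.Ioc_disjoint_Ioi le_rfl) measurableSet_Ioi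
      (hi.mono_set Set.Ioc_subset_Ioi_self) (hi.mono_set (Set.Ioi_subset_Ioi h01)),
      Set.Ioc_union_Ioi_eq_Ioi h01]
  rw [hsplit, add_sub_cancel_right]
  calc (∫ t in Set.Ioc x₀ x₁, Real.exp (-t) * t ^ (a-1))
      ≤ ∫ _t in Set.Ioc x₀ x₁, Real.exp (-x₀) * x₀ ^ (a-1) := by
        refine setIntegral_mono_on (hi.mono_set Set.Ioc_subset_Ioi_self)
          (integrableOn_const measure_Ioc_lt_top.ne) measurableSet_Ioc fun t ht => ?_
        have ht0 : 0 < t := h0.trans ht.1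
        exact mul_le_mul (Real.exp_le_exp.mpr (by linarith [ht.1.le]))
          (Real.rpow_le_rpow_of_nonpos h0 ht.1.le (by linarith))
          (Real.rpow_nonneg ht0.le _) (Real.exp_nonneg _)
    _ = (x₁ - x₀) * (Real.exp (-x₀) * x₀ ^ (a-1)) := by
        rw [setIntegral_const, measureReal_def, Real.volume_Ioc, smul_eq_mul, ENNReal.toReal_ofReal (by linarith)]
    _ = (x₁ - x₀) * Real.exp (-x₀) * x₀ ^ (a - 1) := by ring

theorem stmt16 (k : ℕ) (hk : 1 ≤ k) (a : ℝ) (ha0 : 0 < a) (ha1 : a < 1) (L : ℕ → ℕ)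
    (hL2 : ∀ m, L m ≤ m / 2)
    (hL1 : Tendsto (fun m : ℕ => L m) atTop atTop)
    (hLo : (fun m : ℕ => (L m : ℝ)) =o[atTop] (fun m : ℕ => (m : ℝ))) :
    (fun m : ℕ =>
        ∫ x in Set.Ioi (0 : ℝ),
          (((L m : ℝ) + 1) / Real.Gamma k * Real.exp (-x) * x ^ ((k : ℝ) - 1) *
              regQ k x ^ (L m)) *
            (upperGamma a (((m : ℝ) - L m) * x ^ k / (Nat.factorial k)) -
              upperGamma a ((m : ℝ) * x ^ k / (Nat.factorial k))))
      =O[atTop] (fun m : ℕ => (L m : ℝ) ^ 2 / (m : ℝ) ^ 2) := by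
  set kr : ℝ := (k : ℝ) with hkrdef
  have hkr1 : (1 : ℝ) ≤ kr := by rw [hkrdef]; exact_mod_cast hk
  have hkr0 : (0 : ℝ) < kr := by linarith
  set Kf : ℝ := (Nat.factorial k : ℝ) with hKfdef
  have hKf : (0 : ℝ) < Kf := by rw [hKfdef]; exact_mod_cast k.factorial_pos
  set Γk : ℝ := Real.Gamma kr with hΓkdef
  have hΓk : 0 < Γk := Real.Gamma_pos_of_pos hkr0
  have hΓa : 0 < Real.Gamma (a + 1) := Real.Gamma_pos_of_pos (by linarith)
  set q : ℝ := kr * a + kr - 1 with hqdef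
  have hq : (-1 : ℝ) < q := by have := mul_pos hkr0 ha0; rw [hqdef]; linarith
  refine Asymptotics.IsBigO.of_bound (8 * Real.Gamma (a+1) * Kf / (Γk * kr)) ?_
  filter_upwards [hL1.eventually_ge_atTop 1] with m hm1
  set Lr : ℝ := (L m : ℝ) with hLrdef
  set N : ℝ := (m : ℝ) with hNdef
  have hLr1 : (1 : ℝ) ≤ Lr := by rw [hLrdef]; exact_mod_cast hm1
  have h2L : 2 * Lr ≤ N := by
    have h : 2 * L m ≤ m := by have := hL2 m; omega
    rw [hLrdef, hNdef]; exact_mod_cast h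
  have hc0 : (0 : ℝ) < N - Lr := by linarith
  have hNL : N / 2 ≤ N - Lr := by linarith
  have hN0 : (0 : ℝ) < N := by linarith
  set c : ℝ := (N - Lr) / Kf with hcdef
  have hc : 0 < c := by positivity
  set B : ℝ := (Lr + 1) * Lr / (Γk * Kf) * c ^ (a - 1) with hBdef
  have hB : 0 ≤ B := by positivity
  set g : ℝ → ℝ := fun x => B * (x ^ q * Real.exp (-c * x ^ kr)) with hgdef
  have hg_int : IntegrableOn g (Set.Ioi 0) :=
    (integrableOn_rpow_mul_exp_neg_mul_rpow hq hkr0 hc).const_mul B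
  have hbound : ∀ᵐ x ∂(volume.restrict (Set.Ioi 0)),
      ‖((Lr + 1) / Γk * Real.exp (-x) * x ^ (kr - 1) *
          regQ kr x ^ (L m)) *
          (upperGamma a ((N - Lr) * x ^ k / Kf) -
            upperGamma a (N * x ^ k / Kf))‖ ≤ g x := by
    filter_upwards [ae_restrict_mem measurableSet_Ioi] with x hx
    have hx0 : 0 < x := hx
    have hy : 0 < x ^ k := pow_pos hx0 k
    set x₀ : ℝ := (N - Lr) * x ^ k / Kf with hx₀def
    set x₁ : ℝ := N * x ^ k / Kf with hx₁def
    have hx₀0 : 0 < x₀ := by positivity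
    have hx₀₁ : x₀ ≤ x₁ := by
      rw [hx₀def, hx₁def]
      gcongr
      linarith
    set Δ : ℝ := upperGamma a x₀ - upperGamma a x₁ with hΔdef
    have hΔ0 : 0 ≤ Δ := sub_nonneg.mpr (uG_anti ha0 hx₀0.le hx₀₁)
    have hΔle : Δ ≤ Lr * x ^ k / Kf * Real.exp (-x₀) * x₀ ^ (a - 1) := by
      have := uG_diff_le ha0 ha1.le hx₀0 hx₀₁
      have hsub : x₁ - x₀ = Lr * x ^ k / Kf := by rw [hx₀def, hx₁def]; ring
      rwa [hsub] at this
    set D : ℝ := (Lr + 1) / Γk * Real.exp (-x) * x ^ (kr - 1) * regQ kr x ^ (L m) with hDdef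
    have hrQ0 : 0 ≤ regQ kr x := regQ_nonneg hkr0 hx0.le
    have hrQ1 : regQ kr x ≤ 1 := regQ_le_one hkr0 hx0.le
    have hD0 : 0 ≤ D := by
      have := pow_nonneg hrQ0 (L m)
      positivity
    have hDle : D ≤ (Lr + 1) / Γk * x ^ (kr - 1) := by
      calc D ≤ (Lr + 1) / Γk * 1 * x ^ (kr - 1) * 1 := by
            rw [hDdef]
            gcongr
            · exact Real.exp_le_one_iff.mpr (by linarith)
            · exact pow_le_one₀ hrQ0 hrQ1
        _ = (Lr + 1) / Γk * x ^ (kr - 1) := by ring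
    have key : D * Δ ≤ g x := by
      have h1 : D * Δ ≤ ((Lr + 1) / Γk * x ^ (kr - 1)) *
          (Lr * x ^ k / Kf * Real.exp (-x₀) * x₀ ^ (a - 1)) :=
        mul_le_mul hDle hΔle hΔ0 (by positivity)
      refine h1.trans_eq ?_
      have hx₀eq : x₀ = c * x ^ k := by rw [hx₀def, hcdef]; ring
      rw [show g x = B * (x ^ q * Real.exp (-c * x ^ kr)) from rfl]
      rw [hx₀eq, Real.mul_rpow hc.le hy.le, ← Real.rpow_natCast x k, ← Real.rpow_mul hx0.le,
        hBdef]
      rw [show q = (kr - 1) + (kr + kr * (a - 1)) by rw [hqdef]; ring,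
        Real.rpow_add hx0, Real.rpow_add hx0, neg_mul]
      ring
    calc ‖D * Δ‖ = D * Δ := Real.norm_of_nonneg (mul_nonneg hD0 hΔ0)
      _ ≤ g x := key
  have harg2 : (q + 1) / kr = a + 1 := by
    rw [hqdef]; field_simp; ring
  have hval : ∫ x in Set.Ioi (0:ℝ), g x
      = Real.Gamma (a+1) * Kf / (Γk * kr) * ((Lr + 1) * Lr / (N - Lr) ^ 2) := by
    rw [hgdef]
    simp only
    rw [MeasureTheory.integral_const_mul, integral_rpow_mul_exp_neg_mul_rpow hkr0 hq hc,
      show -(q + 1) / kr = -(a + 1) by rw [neg_div, harg2], harg2]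
    have e1 : c ^ (a - 1) * c ^ (-(a + 1)) = (Kf / (N - Lr)) ^ 2 := by
      rw [← Real.rpow_add hc, show a - 1 + -(a + 1) = ((-2 : ℤ) : ℝ) by push_cast; ring,
        Real.rpow_intCast, hcdef]
      rw [zpow_neg, ← inv_zpow, inv_div]
      norm_cast
    calc B * (c ^ (-(a + 1)) * (1 / kr) * Real.Gamma (a + 1))
        = (Lr + 1) * Lr / (Γk * Kf) * (c ^ (a - 1) * c ^ (-(a + 1))) * (1 / kr)
            * Real.Gamma (a + 1) := by rw [hBdef]; ring
      _ = _ := by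
          rw [e1]
          field_simp
  have hfrac : (Lr + 1) * Lr / (N - Lr) ^ 2 ≤ 8 * (Lr ^ 2 / N ^ 2) := by
    rw [show 8 * (Lr ^ 2 / N ^ 2) = 8 * Lr ^ 2 / N ^ 2 by ring,
      div_le_div_iff₀ (by positivity) (by positivity)]
    have h4 : N ^ 2 ≤ 4 * (N - Lr) ^ 2 := by
      have h := mul_self_le_mul_self (by positivity : (0:ℝ) ≤ N / 2) hNL
      nlinarith [h]
    have h5 : (Lr + 1) * Lr ≤ 2 * Lr ^ 2 := by
      have h := mul_le_mul_of_nonneg_right (by linarith : Lr + 1 ≤ 2 * Lr)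
        (by positivity : (0:ℝ) ≤ Lr)
      nlinarith [h]
    calc (Lr + 1) * Lr * N ^ 2 ≤ 2 * Lr ^ 2 * N ^ 2 :=
          mul_le_mul_of_nonneg_right h5 (by positivity)
      _ ≤ 2 * Lr ^ 2 * (4 * (N - Lr) ^ 2) :=
          mul_le_mul_of_nonneg_left h4 (by positivity)
      _ = 8 * Lr ^ 2 * (N - Lr) ^ 2 := by ring
  refine le_trans (norm_integral_le_of_norm_le hg_int hbound) ?_
  rw [hval, Real.norm_of_nonneg (by positivity : (0:ℝ) ≤ Lr ^ 2 / N ^ 2)]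
  calc Real.Gamma (a+1) * Kf / (Γk * kr) * ((Lr + 1) * Lr / (N - Lr) ^ 2)
      ≤ Real.Gamma (a+1) * Kf / (Γk * kr) * (8 * (Lr ^ 2 / N ^ 2)) :=
        mul_le_mul_of_nonneg_left hfrac (by positivity)
    _ = 8 * Real.Gamma (a+1) * Kf / (Γk * kr) * (Lr ^ 2 / N ^ 2) := by ring
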